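/- Let H be a real Hilbert space, T, A : H → H, B₁ : ℝ^{nw} → H, B₂ : ℝ^{nu} → H, C₁ : H → ℝ^{nz} bounded linear operators, D₁₂ : ℝ^{nu} → ℝ^{nz} a linear map, and ε, γ > 0. Suppose there exist a bounded self-adjoint operator P : H → H with ⟨x, P x⟩ ≥ ε‖x‖² for all x, a bounded operator Z : H → ℝ^{nu}, and a self-adjoint linear map W : ℝ^{nz} → ℝ^{nz} such that: (i) 2⟨P T* x, A* x⟩ + 2⟨Z (T* x), B₂* x⟩ + ‖B₁* x‖² ≤ 0 for all x ∈ H; (ii) ⟨x, P x⟩ + 2⟨v, C₁ (P x) + D₁₂ (Z x)⟩ + ⟨v, W v⟩ ≥ 0 for all x ∈ H and v ∈ ℝ^{nz}; and (iii) trace(W) ≤ γ². Let K : H → ℝ^{nu} be a bounded linear operator with K ∘ P = Z, and assume that for every ū₀ ∈ ℝ^{nz} there exists a differentiable x̄ : [0,∞) → H with T* ẋ̄(t) = (A + B₂ ∘ K)* x̄(t) for all t ≥ 0 and T* x̄(0) = (C₁ + D₁₂ ∘ K)* ū₀. Then for every u₀ ∈ ℝ^{nw}, every differentiable x : [0,∞)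 → H with T ẋ(t) = (A + B₂ ∘ K) x(t) for all t ≥ 0 and T x(0) = B₁ u₀ satisfies ∫₀^∞ ‖(C₁ + D₁₂ ∘ K) x(t)‖² dt ≤ γ² ‖u₀‖². (Corollary 5: the H₂-norm of the closed-loop system Σ(T, A + B₂K, B₁, C₁ + D₁₂K) under state feedback u = Kx is bounded by γ.) -/

import Mathlib

open scoped RealInnerProductSpace
open ContinuousLinearMap (adjoint)


-- Energy estimate for dual solutions
lemma dual_energy
    {H : Type*} [NormedAddCommGroup H] [InnerProductSpace ℝ H] [CompleteSpace H]
    {nw nu : ℕ} (T Atil A : H →L[ℝ] H)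
    (B₁ : EuclideanSpace ℝ (Fin nw) →L[ℝ] H)
    (B₂ : EuclideanSpace ℝ (Fin nu) →L[ℝ] H)
    (P : H →L[ℝ] H) (hPsa : IsSelfAdjoint P)
    (hPnn : ∀ y : H, (0:ℝ) ≤ ⟪y, P y⟫)
    (Z : H →L[ℝ] EuclideanSpace ℝ (Fin nu))
    (hLPI : ∀ x : H,
      2 * ⟪P (adjoint T x), adjoint A x⟫ + 2 * ⟪Z (adjoint T x), adjoint B₂ x⟫ +
        ‖adjoint B₁ x‖ ^ 2 ≤ 0)
    (K : H →L[ℝ] EuclideanSpace ℝ (Fin nu)) (hK : K ∘L P = Z)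
    (hAtil : Atil = A + B₂ ∘L K)
    (xb xb' : ℝ → H)
    (hd : ∀ t : ℝ, 0 ≤ t → HasDerivAt xb (xb' t) t)
    (hode : ∀ t : ℝ, 0 ≤ t → adjoint T (xb' t) = adjoint Atil (xb t))
    (S : ℝ) (hS : 0 ≤ S) :
    ∫ t in (0:ℝ)..S, ‖adjoint B₁ (xb t)‖ ^ 2 ≤ ⟪adjoint T (xb 0), P (adjoint T (xb 0))⟫ := by
  classical
  have hxbc : ∀ t : ℝ, 0 ≤ t → ContinuousAt xb t := fun t ht => (hd t ht).continuousAt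
  set q : H → ℝ := fun y => ‖adjoint B₁ y‖ ^ 2 with hq
  have hqc : Continuous q := ((adjoint B₁).continuous.norm.pow 2)
  set g : ℝ → ℝ := fun t => q (xb (max t 0)) with hgdef
  have hmax : Continuous fun t : ℝ => max t 0 := continuous_id.max continuous_const
  have hgc : Continuous g := by
    rw [continuous_iff_continuousAt]
    intro t
    have h1 : ContinuousAt (xb ∘ fun s : ℝ => max s 0) t :=
      ContinuousAt.comp (hxbc (max t 0) (le_max_right t 0)) hmax.continuousAt
    exact ContinuousAt.comp (x := t) hqc.continuousAt h1
  set V : ℝ → ℝ := fun t => ⟪adjoint T (xb t), P (adjoint T (xb t))⟫ with hV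
  set F : ℝ → ℝ := fun s => V s + ∫ u in (0:ℝ)..s, g u with hF
  -- derivative of V
  have hVd : ∀ t : ℝ, 0 ≤ t →
      HasDerivAt V (2 * ⟪P (adjoint T (xb t)), adjoint Atil (xb t)⟫) t := by
    intro t ht
    have hy : HasDerivAt (fun s => adjoint T (xb s)) (adjoint T (xb' t)) t :=
      ((adjoint T).hasFDerivAt).comp_hasDerivAt t (hd t ht)
    have hPy : HasDerivAt (fun s => P (adjoint T (xb s))) (P (adjoint T (xb' t))) t :=
      (P.hasFDerivAt).comp_hasDerivAt t hy
    have hPsym : ∀ a c : H, ⟪a, P c⟫ = ⟪P a, c⟫ := fun a c => by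
      rw [← ContinuousLinearMap.adjoint_inner_left P c a, hPsa.adjoint_eq]
    have h2 := hy.inner (𝕜 := ℝ) hPy
    refine h2.congr_deriv ?_
    rw [hode t ht, hPsym,
      real_inner_comm (adjoint Atil (xb t)) (P (adjoint T (xb t)))]
    ring
  -- the derivative bound
  have hVle : ∀ t : ℝ, 0 ≤ t → 2 * ⟪P (adjoint T (xb t)), adjoint Atil (xb t)⟫ + g t ≤ 0 := by
    intro t ht
    have h1 := hLPI (xb t)
    have hexp : adjoint Atil (xb t) = adjoint A (xb t) + adjoint K (adjoint B₂ (xb t)) := by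
      rw [hAtil, map_add, ContinuousLinearMap.adjoint_comp]
      rfl
    have h2 : ⟪P (adjoint T (xb t)), adjoint Atil (xb t)⟫
        = ⟪P (adjoint T (xb t)), adjoint A (xb t)⟫ + ⟪Z (adjoint T (xb t)), adjoint B₂ (xb t)⟫ := by
      rw [hexp, inner_add_right]
      congr 1
      rw [ContinuousLinearMap.adjoint_inner_right, ← hK]
      rfl
    have h3 : g t = ‖adjoint B₁ (xb t)‖ ^ 2 := by
      simp [hgdef, hq, max_eq_left ht]
    rw [h2, h3]
    linarith
  have hGd : ∀ t : ℝ, HasDerivAt (fun s => ∫ u in (0:ℝ)..s, g u) (g t) t := fun t =>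
    intervalIntegral.integral_hasDerivAt_right (hgc.intervalIntegrable _ _)
      (hgc.stronglyMeasurableAtFilter _ _) hgc.continuousAt
  have hFd : ∀ t : ℝ, 0 ≤ t →
      HasDerivAt F (2 * ⟪P (adjoint T (xb t)), adjoint Atil (xb t)⟫ + g t) t := by
    intro t ht
    exact (hVd t ht).add (hGd t)
  have hanti : AntitoneOn F (Set.Ici 0) := by
    apply antitoneOn_of_deriv_nonpos (convex_Ici 0)
    · intro t ht
      exact ((hFd t ht).continuousAt).continuousWithinAt
    · intro t ht
      rw [interior_Ici] at ht
      exact ((hFd t (le_of_lt ht)).differentiableAt).differentiableWithinAt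
    · intro t ht
      rw [interior_Ici] at ht
      rw [(hFd t (le_of_lt ht)).deriv]
      exact hVle t (le_of_lt ht)
  have hFS : F S ≤ F 0 := hanti (Set.self_mem_Ici) (Set.mem_Ici.2 hS) hS
  have hF0 : F 0 = V 0 := by simp [hF]
  have hVS : 0 ≤ V S := hPnn _
  have hgeq : ∫ t in (0:ℝ)..S, ‖adjoint B₁ (xb t)‖ ^ 2 = ∫ u in (0:ℝ)..S, g u := by
    apply intervalIntegral.integral_congr
    intro t ht
    rw [Set.uIcc_of_le hS] at ht
    simp [hgdef, hq, max_eq_left ht.1]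
  have : V S + ∫ u in (0:ℝ)..S, g u ≤ V 0 := by rw [← hF0]; exact hFS
  rw [hgeq]
  have : V 0 = ⟪adjoint T (xb 0), P (adjoint T (xb 0))⟫ := rfl
  linarith [hPnn (adjoint T (xb S))]

-- duality pairing is constant
lemma dual_pairing
    {H : Type*} [NormedAddCommGroup H] [InnerProductSpace ℝ H] [CompleteSpace H]
    (T Atil : H →L[ℝ] H)
    (x x' : ℝ → H)
    (hx : ∀ t : ℝ, 0 ≤ t → HasDerivAt x (x' t) t)
    (hodex : ∀ t : ℝ, 0 ≤ t → T (x' t) = Atil (x t))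
    (xb xb' : ℝ → H)
    (hd : ∀ t : ℝ, 0 ≤ t → HasDerivAt xb (xb' t) t)
    (hode : ∀ t : ℝ, 0 ≤ t → adjoint T (xb' t) = adjoint Atil (xb t))
    (s : ℝ) (hs : 0 ≤ s) :
    ⟪xb 0, T (x s)⟫ = ⟪xb s, T (x 0)⟫ := by
  set G : ℝ → ℝ := fun t => ⟪xb (s - t), T (x t)⟫ with hG
  have hGd : ∀ t ∈ Set.Icc (0:ℝ) s, HasDerivAt G 0 t := by
    intro t ht
    have hst : 0 ≤ s - t := by linarith [ht.2]
    have hb : HasDerivAt (fun τ : ℝ => xb (s - τ)) ((-1 : ℝ) • xb' (s - t)) t :=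
      HasDerivAt.scomp_of_eq t (hd (s - t) hst) ((hasDerivAt_id t).const_sub s) rfl
    have hTx : HasDerivAt (fun τ => T (x τ)) (T (x' t)) t :=
      (T.hasFDerivAt).comp_hasDerivAt t (hx t ht.1)
    have h2 := hb.inner (𝕜 := ℝ) hTx
    have h3 : ⟪xb (s - t), T (x' t)⟫ + ⟪(-1 : ℝ) • xb' (s - t), T (x t)⟫ = 0 := by
      rw [inner_smul_left]
      have h4 : ⟪xb' (s - t), T (x t)⟫ = ⟪xb (s - t), T (x' t)⟫ := by
        rw [← ContinuousLinearMap.adjoint_inner_left, hode (s - t) hst,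
          ContinuousLinearMap.adjoint_inner_left, ← hodex t ht.1]
      rw [h4]
      simp
    rw [h3] at h2
    exact h2
  have hGc : ContinuousOn G (Set.Icc 0 s) :=
    fun t ht => ((hGd t ht).continuousAt).continuousWithinAt
  have := constant_of_has_deriv_right_zero hGc
    (fun t ht => ((hGd t (Set.mem_Icc_of_Ico ht)).hasDerivWithinAt)) s
    (Set.right_mem_Icc.2 hs)
  simpa [hG] using this

lemma trace_eq_sum_inner_onb {ι E : Type*} [Fintype ι] [DecidableEq ι]
    [NormedAddCommGroup E] [InnerProductSpace ℝ E] [FiniteDimensional ℝ E]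
    (b : OrthonormalBasis ι ℝ E) (f : E →ₗ[ℝ] E) :
    LinearMap.trace ℝ E f = ∑ i, ⟪b i, f (b i)⟫ := by
  rw [LinearMap.trace_eq_matrix_trace ℝ b.toBasis f, Matrix.trace]
  refine Finset.sum_congr rfl fun i _ => ?_
  rw [Matrix.diag_apply, LinearMap.toMatrix_apply]
  simp [OrthonormalBasis.coe_toBasis, ← b.repr_apply_apply]


/-- **Corollary 5 (the `H₂`-norm of the closed-loop system under state feedback `u = Kx`).**
If `P ⪰ εI` self-adjoint, `Z`, and `W` self-adjoint satisfy the controller LPI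
(i) `A P T* + T P A* + B₂ Z T* + T Z* B₂* + B₁ B₁* ⪯ 0`,
(ii) `[[P, (C₁P + D₁₂Z)*], [C₁P + D₁₂Z, W]] ⪰ 0`, and (iii) `trace(W) ≤ γ²`,
and `K = Z P⁻¹`, and dual closed-loop solutions exist, then the closed-loop system
`Σ(T, A + B₂K, B₁, C₁ + D₁₂K)` has `H₂`-norm at most `γ`. -/
theorem pie_H2_optimal_controller
    {H : Type*} [NormedAddCommGroup H] [InnerProductSpace ℝ H] [CompleteSpace H]
    (nw nu nz : ℕ) (T A : H →L[ℝ] H)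
    (B₁ : EuclideanSpace ℝ (Fin nw) →L[ℝ] H)
    (B₂ : EuclideanSpace ℝ (Fin nu) →L[ℝ] H)
    (C₁ : H →L[ℝ] EuclideanSpace ℝ (Fin nz))
    (D₁₂ : EuclideanSpace ℝ (Fin nu) →L[ℝ] EuclideanSpace ℝ (Fin nz))
    (ε γ : ℝ) (hε : 0 < ε) (hγ : 0 < γ)
    (P : H →L[ℝ] H) (hPsa : IsSelfAdjoint P)
    (hPpos : ∀ x : H, ε * ‖x‖ ^ 2 ≤ ⟪x, P x⟫)
    (Z : H →L[ℝ] EuclideanSpace ℝ (Fin nu))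
    (W : EuclideanSpace ℝ (Fin nz) →L[ℝ] EuclideanSpace ℝ (Fin nz)) (hWsa : IsSelfAdjoint W)
    (hLPI : ∀ x : H,
      2 * ⟪P (ContinuousLinearMap.adjoint T x), ContinuousLinearMap.adjoint A x⟫ +
        2 * ⟪Z (ContinuousLinearMap.adjoint T x), ContinuousLinearMap.adjoint B₂ x⟫ +
        ‖ContinuousLinearMap.adjoint B₁ x‖ ^ 2 ≤ 0)
    (hblock : ∀ (x : H) (v : EuclideanSpace ℝ (Fin nz)),
      0 ≤ ⟪x, P x⟫ + 2 * ⟪v, C₁ (P x) + D₁₂ (Z x)⟫ + ⟪v, W v⟫)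
    (htrace : LinearMap.trace ℝ (EuclideanSpace ℝ (Fin nz)) W.toLinearMap ≤ γ ^ 2)
    (K : H →L[ℝ] EuclideanSpace ℝ (Fin nu)) (hK : K ∘L P = Z)
    (hdual_exist : ∀ ub₀ : EuclideanSpace ℝ (Fin nz), ∃ xb xb' : ℝ → H,
      (∀ t : ℝ, 0 ≤ t → HasDerivAt xb (xb' t) t) ∧
      (∀ t : ℝ, 0 ≤ t →
        ContinuousLinearMap.adjoint T (xb' t) =
          ContinuousLinearMap.adjoint (A + B₂ ∘L K) (xb t)) ∧
      ContinuousLinearMap.adjoint T (xb 0) =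
        ContinuousLinearMap.adjoint (C₁ + D₁₂ ∘L K) ub₀) :
    ∀ (u₀ : EuclideanSpace ℝ (Fin nw)) (x x' : ℝ → H),
      (∀ t : ℝ, 0 ≤ t → HasDerivAt x (x' t) t) →
      (∀ t : ℝ, 0 ≤ t → T (x' t) = (A + B₂ ∘L K) (x t)) →
      T (x 0) = B₁ u₀ →
      (∫ t in Set.Ioi (0 : ℝ), ‖(C₁ + D₁₂ ∘L K) (x t)‖ ^ 2) ≤ γ ^ 2 * ‖u₀‖ ^ 2 := by
  intro u₀ x x' hx hodex hinit
  classical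
  set Atil := A + B₂ ∘L K with hAtil
  set Ctil := C₁ + D₁₂ ∘L K with hCtil
  have hPnn : ∀ y : H, (0:ℝ) ≤ ⟪y, P y⟫ := fun y =>
    le_trans (by positivity) (hPpos y)
  -- Schur-complement style consequence of the block positivity
  have hblock' : ∀ v : EuclideanSpace ℝ (Fin nz),
      ⟪adjoint Ctil v, P (adjoint Ctil v)⟫ ≤ ⟪v, W v⟫ := by
    intro v
    have hCP : ∀ y : H, Ctil (P y) = C₁ (P y) + D₁₂ (Z y) := by
      intro y
      rw [hCtil]
      simp only [ContinuousLinearMap.add_apply, ContinuousLinearMap.comp_apply]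
      rw [← hK]; rfl
    have h := hblock (-(adjoint Ctil v)) v
    rw [← hCP] at h
    have e1 : ⟪-(adjoint Ctil v), P (-(adjoint Ctil v))⟫
        = ⟪adjoint Ctil v, P (adjoint Ctil v)⟫ := by
      rw [map_neg, inner_neg_neg]
    have e2 : ⟪v, Ctil (P (-(adjoint Ctil v)))⟫
        = -⟪adjoint Ctil v, P (adjoint Ctil v)⟫ := by
      rw [map_neg, map_neg, inner_neg_right, ← ContinuousLinearMap.adjoint_inner_left]
    rw [e1, e2] at h
    linarith
  -- orthonormal basis and the dual solutions
  set b := EuclideanSpace.basisFun (Fin nz) ℝ with hb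
  choose xb xbd hdd hdode hdinit using fun i : Fin nz => hdual_exist (b i)
  have henergy : ∀ (i : Fin nz) (S : ℝ), 0 ≤ S →
      ∫ t in (0:ℝ)..S, ‖adjoint B₁ (xb i t)‖ ^ 2 ≤ ⟪b i, W (b i)⟫ := by
    intro i S hS
    have h1 := dual_energy T Atil A B₁ B₂ P hPsa hPnn Z hLPI K hK hAtil
      (xb i) (xbd i) (hdd i) (hdode i) S hS
    rw [hdinit i] at h1
    exact h1.trans (hblock' (b i))
  have hdualrel : ∀ (i : Fin nz) (s : ℝ), 0 ≤ s →
      ⟪b i, Ctil (x s)⟫ = ⟪adjoint B₁ (xb i s), u₀⟫ := by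
    intro i s hs
    have h := dual_pairing T Atil x x' hx hodex (xb i) (xbd i) (hdd i) (hdode i) s hs
    rw [hinit] at h
    calc ⟪b i, Ctil (x s)⟫ = ⟪adjoint Ctil (b i), x s⟫ :=
          (ContinuousLinearMap.adjoint_inner_left _ _ _).symm
      _ = ⟪adjoint T (xb i 0), x s⟫ := by rw [hdinit i]
      _ = ⟪xb i 0, T (x s)⟫ := ContinuousLinearMap.adjoint_inner_left _ _ _
      _ = ⟪xb i s, B₁ u₀⟫ := h
      _ = ⟪adjoint B₁ (xb i s), u₀⟫ :=
          (ContinuousLinearMap.adjoint_inner_left _ _ _).symm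
  -- the finite-horizon bound
  set f : ℝ → ℝ := fun s => ‖Ctil (x s)‖ ^ 2 with hf
  have hxc : ∀ t : ℝ, 0 ≤ t → ContinuousAt x t := fun t ht => (hx t ht).continuousAt
  have hfc : ∀ t : ℝ, 0 ≤ t → ContinuousAt f t := fun t ht =>
    ContinuousAt.comp (x := t) (Ctil.continuous.norm.pow 2).continuousAt (hxc t ht)
  have key : ∀ S : ℝ, 0 ≤ S → ∫ s in (0:ℝ)..S, f s ≤ γ ^ 2 * ‖u₀‖ ^ 2 := by
    intro S hS
    have hIcc : ∀ t ∈ Set.uIcc (0:ℝ) S, (0:ℝ) ≤ t := by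
      rw [Set.uIcc_of_le hS]; exact fun t ht => ht.1
    have hint : ∀ i : Fin nz,
        IntervalIntegrable (fun s => ⟪b i, Ctil (x s)⟫ ^ 2) MeasureTheory.volume 0 S := by
      intro i
      apply ContinuousOn.intervalIntegrable
      intro t ht
      exact (ContinuousAt.comp (x := t)
        ((continuous_const.inner Ctil.continuous).pow 2).continuousAt
        (hxc t (hIcc t ht))).continuousWithinAt
    have hintB : ∀ i : Fin nz,
        IntervalIntegrable (fun s => ‖adjoint B₁ (xb i s)‖ ^ 2 * ‖u₀‖ ^ 2)
          MeasureTheory.volume 0 S := by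
      intro i
      apply ContinuousOn.intervalIntegrable
      intro t ht
      exact (ContinuousAt.mul
        (ContinuousAt.comp (x := t) ((adjoint B₁).continuous.norm.pow 2).continuousAt
          ((hdd i t (hIcc t ht)).continuousAt))
        continuousAt_const).continuousWithinAt
    have hfeq : ∀ s : ℝ, f s = ∑ i, ⟪b i, Ctil (x s)⟫ ^ 2 := by
      intro s
      calc f s = ⟪Ctil (x s), Ctil (x s)⟫ := (real_inner_self_eq_norm_sq _).symm
        _ = ∑ i, ⟪Ctil (x s), b i⟫ * ⟪b i, Ctil (x s)⟫ :=
            (b.sum_inner_mul_inner (Ctil (x s)) (Ctil (x s))).symm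
        _ = ∑ i, ⟪b i, Ctil (x s)⟫ ^ 2 := by
            refine Finset.sum_congr rfl fun i _ => ?_
            rw [real_inner_comm (Ctil (x s)) (b i), pow_two]
    rw [intervalIntegral.integral_congr
      (g := fun s => ∑ i, ⟪b i, Ctil (x s)⟫ ^ 2) (fun s _ => hfeq s)]
    rw [intervalIntegral.integral_finset_sum (fun i _ => hint i)]
    have hterm : ∀ i : Fin nz,
        (∫ s in (0:ℝ)..S, ⟪b i, Ctil (x s)⟫ ^ 2) ≤ ⟪b i, W (b i)⟫ * ‖u₀‖ ^ 2 := by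
      intro i
      have h1 : (∫ s in (0:ℝ)..S, ⟪b i, Ctil (x s)⟫ ^ 2)
          ≤ ∫ s in (0:ℝ)..S, ‖adjoint B₁ (xb i s)‖ ^ 2 * ‖u₀‖ ^ 2 := by
        apply intervalIntegral.integral_mono_on hS (hint i) (hintB i)
        intro s hs
        rw [hdualrel i s hs.1]
        have hcs := real_inner_mul_inner_self_le (adjoint B₁ (xb i s)) u₀
        rw [real_inner_self_eq_norm_sq, real_inner_self_eq_norm_sq] at hcs
        rw [pow_two]
        exact hcs
      have h2 : (∫ s in (0:ℝ)..S, ‖adjoint B₁ (xb i s)‖ ^ 2 * ‖u₀‖ ^ 2)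
          = (∫ s in (0:ℝ)..S, ‖adjoint B₁ (xb i s)‖ ^ 2) * ‖u₀‖ ^ 2 := by
        rw [intervalIntegral.integral_mul_const]
      refine h1.trans ?_
      rw [h2]
      exact mul_le_mul_of_nonneg_right (henergy i S hS) (by positivity)
    calc (∑ i, ∫ s in (0:ℝ)..S, ⟪b i, Ctil (x s)⟫ ^ 2)
        ≤ ∑ i, ⟪b i, W (b i)⟫ * ‖u₀‖ ^ 2 := Finset.sum_le_sum (fun i _ => hterm i)
      _ = (∑ i, ⟪b i, W (b i)⟫) * ‖u₀‖ ^ 2 := by rw [← Finset.sum_mul]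
      _ ≤ γ ^ 2 * ‖u₀‖ ^ 2 := by
          apply mul_le_mul_of_nonneg_right _ (by positivity)
          have htr := trace_eq_sum_inner_onb b W.toLinearMap
          have : (∑ i, ⟪b i, W (b i)⟫)
              = LinearMap.trace ℝ (EuclideanSpace ℝ (Fin nz)) W.toLinearMap := by
            rw [htr]; rfl
          rw [this]
          exact htrace
  -- pass to the improper integral
  have hfnn : ∀ s : ℝ, 0 ≤ f s := fun s => by positivity
  have hfi : ∀ n : ℕ, MeasureTheory.IntegrableOn f (Set.Ioc (0:ℝ) (n:ℝ)) := by
    intro n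
    apply (ContinuousOn.integrableOn_Icc ?_).mono_set Set.Ioc_subset_Icc_self
    intro t ht
    exact (hfc t ht.1).continuousWithinAt
  have hbnd : ∀ n : ℕ, (∫ s in (0:ℝ)..(n:ℝ), ‖f s‖) ≤ γ ^ 2 * ‖u₀‖ ^ 2 := by
    intro n
    calc (∫ s in (0:ℝ)..(n:ℝ), ‖f s‖) = ∫ s in (0:ℝ)..(n:ℝ), f s := by
          apply intervalIntegral.integral_congr
          intro s _
          exact Real.norm_of_nonneg (hfnn s)
      _ ≤ γ ^ 2 * ‖u₀‖ ^ 2 := key (n:ℝ) n.cast_nonneg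
  have hInt : MeasureTheory.IntegrableOn f (Set.Ioi (0:ℝ)) :=
    MeasureTheory.integrableOn_Ioi_of_intervalIntegral_norm_bounded
      (γ ^ 2 * ‖u₀‖ ^ 2) 0 hfi tendsto_natCast_atTop_atTop
      (Filter.Eventually.of_forall hbnd)
  have htend := MeasureTheory.intervalIntegral_tendsto_integral_Ioi 0 hInt
    tendsto_natCast_atTop_atTop
  exact le_of_tendsto htend
    (Filter.Eventually.of_forall fun n : ℕ => key (n:ℝ) n.cast_nonneg)
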